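/- Let B be the open unit ball of ℝ^M with M ≥ 3, and let P_n, n ∈ ℕ, be a sequence of convex polytopes with P_1 ⊂ Int P_2 ⊂ P_2 ⊂ Int P_3 ⊂ ⋯ ⊂ B, with ∪_{j=1}^∞ P_j = B, and such that every sequence w_j ∈ skel(P_j), j ∈ ℕ, satisfies Σ_{j=1}^∞ |w_{j+1} − w_j| = ∞. Let θ_n be a decreasing sequence of positive numbers with Σ_{n=1}^∞ θ_n < ∞ and, for each n, let U_n = { w ∈ bP_n : dist(w, skel(P_n)) < θ_n }. If p : [0,1) → B is a path such that |p(t)| → 1 as t → 1 and such that for all sufficiently large n the set p([0,1)) meets bP_n only at U_n, then p has infinite length. -/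

import Mathlib

open Module Submodule Set RealInnerProductSpace

private lemma exists_facet' (M : ℕ) (hM : 2 ≤ M) (V : Finset (EuclideanSpace ℝ (Fin M)))
    (hI : (interior (convexHull ℝ (V : Set (EuclideanSpace ℝ (Fin M))))).Nonempty) :
    ∃ F : Set (EuclideanSpace ℝ (Fin M)),
      (IsExtreme ℝ (convexHull ℝ (V : Set (EuclideanSpace ℝ (Fin M)))) F ∧ Convex ℝ F ∧
        Module.finrank ℝ (vectorSpan ℝ F) = M - 1) ∧ IsCompact F ∧ IsClosed F := by
  set P : Set (EuclideanSpace ℝ (Fin M)) := convexHull ℝ (V : Set (EuclideanSpace ℝ (Fin M))) with hP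
  have hPne : P.Nonempty := hI.mono interior_subset
  have hPcompact : IsCompact P := V.finite_toSet.isCompact_convexHull ℝ
  have hPconv : Convex ℝ P := convex_convexHull _ _
  have hPclosed : IsClosed P := hPcompact.isClosed
  have hVsub : (V : Set (EuclideanSpace ℝ (Fin M))) ⊆ P := subset_convexHull _ _
  have hVspan : vectorSpan ℝ (V : Set (EuclideanSpace ℝ (Fin M))) = ⊤ := by
    rw [← direction_affineSpan, affineSpan_eq_top_of_nonempty_interior hI]
    exact AffineSubspace.direction_top _ _ _
  set Fa : EuclideanSpace ℝ (Fin M) → Set (EuclideanSpace ℝ (Fin M)) := fun a => {x ∈ P | ∀ y ∈ P, innerSL ℝ a y ≤ innerSL ℝ a x} with hFa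
  have hFexposed : ∀ a, IsExposed ℝ P (Fa a) := fun a _ => ⟨innerSL ℝ a, rfl⟩
  have hFsub : ∀ a, Fa a ⊆ P := fun a => Set.sep_subset _ _
  have hFconv : ∀ a, Convex ℝ (Fa a) := fun a => (hFexposed a).convex hPconv
  have hFne : ∀ a, (Fa a).Nonempty := fun a => by
    obtain ⟨x, hx, hmax⟩ := hPcompact.exists_isMaxOn hPne ((innerSL ℝ a).continuous.continuousOn)
    exact ⟨x, hx, fun y hy => hmax hy⟩
  have hFclosed : ∀ a, IsClosed (Fa a) := by
    intro a
    have : Fa a = P ∩ ⋂ y ∈ P, {x : EuclideanSpace ℝ (Fin M) | innerSL ℝ a y ≤ innerSL ℝ a x} := by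
      ext x; simp [hFa, Set.mem_iInter]
    rw [this]
    exact hPclosed.inter (isClosed_biInter fun y _ =>
      isClosed_le continuous_const (innerSL ℝ a).continuous)
  -- difference of two points of `Fa a` is orthogonal to `a`
  have hdiff : ∀ a, ∀ x ∈ Fa a, ∀ y ∈ Fa a, ⟪a, x - y⟫ = 0 := by
    intro a x hx y hy
    have h1 : ⟪a, y⟫ ≤ ⟪a, x⟫ := by simpa [innerSL_apply_apply] using hx.2 y hy.1
    have h2 : ⟪a, x⟫ ≤ ⟪a, y⟫ := by simpa [innerSL_apply_apply] using hy.2 x hx.1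
    rw [inner_sub_right]
    linarith
  have horth : ∀ a, a ∈ (vectorSpan ℝ (Fa a))ᗮ := by
    intro a
    rw [vectorSpan_def]
    intro v hv
    induction hv using Submodule.span_induction with
    | mem z hz =>
        obtain ⟨x, hx, y, hy, rfl⟩ := hz
        simp only [vsub_eq_sub, real_inner_comm]
        exact hdiff a x hx y hy
    | zero => simp
    | add x y _ _ hx hy => rw [inner_add_left]; rw [hx, hy]; ring
    | smul c x _ hx => rw [real_inner_smul_left, hx]; ring
  have hdim_le : ∀ a : EuclideanSpace ℝ (Fin M), a ≠ 0 → finrank ℝ (vectorSpan ℝ (Fa a)) ≤ M - 1 := by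
    intro a ha
    have hle : vectorSpan ℝ (Fa a) ≤ (span ℝ {a})ᗮ := by
      rw [vectorSpan_def]
      rw [Submodule.span_le]
      rintro z ⟨x, hx, y, hy, rfl⟩
      rw [SetLike.mem_coe, Submodule.mem_orthogonal_singleton_iff_inner_right]
      simp only [vsub_eq_sub]
      exact hdiff a x hx y hy
    have h1 : finrank ℝ (span ℝ {a}) + finrank ℝ ((span ℝ {a})ᗮ) = M := by
      rw [Submodule.finrank_add_finrank_orthogonal]
      simp [finrank_euclideanSpace]
    rw [finrank_span_singleton ha] at h1
    have := Submodule.finrank_mono hle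
    omega
  -- key extension step
  have key : ∀ a : EuclideanSpace ℝ (Fin M), a ≠ 0 → finrank ℝ (vectorSpan ℝ (Fa a)) + 2 ≤ M →
      ∃ b : EuclideanSpace ℝ (Fin M), b ≠ 0 ∧ finrank ℝ (vectorSpan ℝ (Fa a)) < finrank ℝ (vectorSpan ℝ (Fa b)) := by
    intro a ha hdim
    set W := vectorSpan ℝ (Fa a) with hW
    have haW : a ∈ Wᗮ := horth a
    have hrankW : finrank ℝ W + finrank ℝ Wᗮ = M := by
      rw [Submodule.finrank_add_finrank_orthogonal]; simp [finrank_euclideanSpace]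
    -- find u ∈ Wᗮ, u ∉ span {a}
    have hu : ∃ u ∈ Wᗮ, u ∉ span ℝ {a} := by
      by_contra h
      push_neg at h
      have hle : Wᗮ ≤ span ℝ {a} := fun x hx => h x hx
      have := Submodule.finrank_mono hle
      rw [finrank_span_singleton ha] at this
      omega
    obtain ⟨u, huW, huA⟩ := hu
    obtain ⟨a₀, ha₀⟩ := hFne a
    -- sign choice
    have hsign : ∃ u' : EuclideanSpace ℝ (Fin M), u' ∈ Wᗮ ∧ u' ∉ span ℝ {a} ∧ ∃ v ∈ V, 0 < ⟪u', v - a₀⟫ := by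
      by_contra h
      push_neg at h
      have h1 := h u huW huA
      have h2 := h (-u) (neg_mem huW) (fun hc => huA (by simpa using neg_mem hc))
      have hzero : ∀ v ∈ V, ⟪u, v - a₀⟫ = 0 := by
        intro v hv
        have := h1 v hv
        have := h2 v hv
        rw [inner_neg_left] at this
        linarith
      have hbot : u ∈ (vectorSpan ℝ (V : Set (EuclideanSpace ℝ (Fin M))))ᗮ := by
        rw [vectorSpan_def]
        intro z hz
        induction hz using Submodule.span_induction with
        | mem z hz =>
            obtain ⟨x, hx, y, hy, rfl⟩ := hz
            simp only [vsub_eq_sub, real_inner_comm]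
            have : ⟪u, x - y⟫ = ⟪u, x - a₀⟫ - ⟪u, y - a₀⟫ := by
              rw [← inner_sub_right]; congr 1; abel
            rw [this, hzero x hx, hzero y hy]; ring
        | zero => simp
        | add x y _ _ hx hy => rw [inner_add_left, hx, hy]; ring
        | smul c x _ hx => rw [real_inner_smul_left, hx]; ring
      rw [hVspan, Submodule.top_orthogonal_eq_bot] at hbot
      exact huA (by simp [(Submodule.mem_bot ℝ).1 hbot])
    obtain ⟨u, huW, huA, v₀, hv₀V, hv₀pos⟩ := hsign
    have hWu : ∀ w ∈ W, ⟪u, w⟫ = 0 := by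
      intro w hw
      rw [real_inner_comm]
      exact huW w hw
    set c := ⟪a, a₀⟫ with hc
    have hamax : ∀ y ∈ P, ⟪a, y⟫ ≤ c := by
      intro y hy
      simpa [innerSL_apply_apply] using ha₀.2 y hy
    have hFa_mem : ∀ x, x ∈ Fa a ↔ x ∈ P ∧ ⟪a, x⟫ = c := by
      intro x
      constructor
      · intro hx
        refine ⟨hx.1, le_antisymm (hamax x hx.1) ?_⟩
        simpa [innerSL_apply_apply] using hx.2 a₀ ha₀.1
      · rintro ⟨hxP, hxc⟩
        exact ⟨hxP, fun y hy => by simpa [innerSL_apply_apply, hxc] using hamax y hy⟩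
    set T := V.filter (fun v => 0 < ⟪u, v - a₀⟫) with hT
    have hTne : T.Nonempty := ⟨v₀, Finset.mem_filter.2 ⟨hv₀V, hv₀pos⟩⟩
    have hTpos : ∀ v ∈ T, 0 < ⟪u, v - a₀⟫ := fun v hv => (Finset.mem_filter.1 hv).2
    have hTlt : ∀ v ∈ T, ⟪a, v⟫ < c := by
      intro v hv
      rcases Finset.mem_filter.1 hv with ⟨hvV, hvpos⟩
      rcases lt_or_eq_of_le (hamax v (hVsub hvV)) with h | h
      · exact h
      · exfalso
        have hvF : v ∈ Fa a := (hFa_mem v).2 ⟨hVsub hvV, h⟩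
        have : v - a₀ ∈ W := by
          have := vsub_mem_vectorSpan ℝ hvF ha₀
          simpa [vsub_eq_sub] using this
        have := hWu _ this
        linarith
    set ε := T.inf' hTne (fun v => (c - ⟪a, v⟫) / ⟪u, v - a₀⟫) with hε
    have hεpos : 0 < ε := by
      rw [hε, Finset.lt_inf'_iff]
      intro v hv
      exact div_pos (by linarith [hTlt v hv]) (hTpos v hv)
    set b := a + ε • u with hb
    have hbne : b ≠ 0 := by
      intro h
      apply huA
      have : u = (-ε⁻¹) • a := by
        have h2 : ε • u = -a := by
          have := h
          rw [hb] at this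
          linear_combination (norm := module) this
        calc u = ε⁻¹ • (ε • u) := by rw [smul_smul, inv_mul_cancel₀ hεpos.ne', one_smul]
        _ = (-ε⁻¹) • a := by rw [h2]; module
      rw [this]
      exact Submodule.smul_mem _ _ (Submodule.mem_span_singleton_self a)
    set c' := c + ε * ⟪u, a₀⟫ with hc'
    have hbub : ∀ y ∈ P, ⟪b, y⟫ ≤ c' := by
      have hhalf : Convex ℝ {y : EuclideanSpace ℝ (Fin M) | ⟪b, y⟫ ≤ c'} :=
        convex_halfSpace_le ⟨fun x y => inner_add_right _ _ _, fun r x => real_inner_smul_right _ _ _⟩ _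
      have hVsubH : (V : Set (EuclideanSpace ℝ (Fin M))) ⊆ {y : EuclideanSpace ℝ (Fin M) | ⟪b, y⟫ ≤ c'} := by
        intro v hv
        have hexp : ⟪b, v⟫ = ⟪a, v⟫ + ε * ⟪u, v - a₀⟫ + ε * ⟪u, a₀⟫ := by
          rw [hb, inner_add_left, real_inner_smul_left]
          rw [show ⟪u, v - a₀⟫ = ⟪u, v⟫ - ⟪u, a₀⟫ from inner_sub_right _ _ _]
          ring
        simp only [Set.mem_setOf_eq, hexp, hc']
        rcases le_or_gt ⟪u, v - a₀⟫ 0 with h | h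
        · have h1 := hamax v (hVsub hv)
          nlinarith
        · have hvT : v ∈ T := Finset.mem_filter.2 ⟨hv, h⟩
          have h1 : ε ≤ (c - ⟪a, v⟫) / ⟪u, v - a₀⟫ := Finset.inf'_le _ hvT
          have h2 : ε * ⟪u, v - a₀⟫ ≤ c - ⟪a, v⟫ := by
            rw [← le_div_iff₀ h] at *
            exact h1
          linarith
      intro y hy
      exact convexHull_min hVsubH hhalf hy
    obtain ⟨vs, hvsT, hvseq⟩ := T.exists_mem_eq_inf' hTne (fun v => (c - ⟪a, v⟫) / ⟪u, v - a₀⟫)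
    have hvs_pos := hTpos vs hvsT
    have hbvs : ⟪b, vs⟫ = c' := by
      have hexp : ⟪b, vs⟫ = ⟪a, vs⟫ + ε * ⟪u, vs - a₀⟫ + ε * ⟪u, a₀⟫ := by
        rw [hb, inner_add_left, real_inner_smul_left]
        rw [show ⟪u, vs - a₀⟫ = ⟪u, vs⟫ - ⟪u, a₀⟫ from inner_sub_right _ _ _]
        ring
      have : ε * ⟪u, vs - a₀⟫ = c - ⟪a, vs⟫ := by
        rw [hε, hvseq, div_mul_cancel₀ _ hvs_pos.ne']
      rw [hexp, this, hc']; ring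
    have hvsF : vs ∈ Fa b := by
      refine ⟨hVsub (Finset.mem_filter.1 hvsT).1, fun y hy => ?_⟩
      simp only [innerSL_apply_apply]
      rw [hbvs]
      exact hbub y hy
    have hsubF : Fa a ⊆ Fa b := by
      intro x hx
      obtain ⟨hxP, hxc⟩ := (hFa_mem x).1 hx
      have hxa₀ : ⟪u, x - a₀⟫ = 0 := by
        apply hWu
        have := vsub_mem_vectorSpan ℝ (s := Fa a) hx ha₀
        simpa [vsub_eq_sub] using this
      have hbx : ⟪b, x⟫ = c' := by
        rw [hb, inner_add_left, real_inner_smul_left]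
        rw [show ⟪u, x⟫ = ⟪u, x - a₀⟫ + ⟪u, a₀⟫ by rw [← inner_add_right]; congr 1; abel]
        rw [hxa₀, hxc, hc']; ring
      refine ⟨hxP, fun y hy => ?_⟩
      simp only [innerSL_apply_apply]
      rw [hbx]
      exact hbub y hy
    refine ⟨b, hbne, ?_⟩
    apply Submodule.finrank_lt_finrank_of_lt
    apply lt_of_le_of_ne (vectorSpan_mono ℝ hsubF)
    intro hWeq
    have hmem : vs - a₀ ∈ vectorSpan ℝ (Fa b) := by
      have := vsub_mem_vectorSpan ℝ (s := Fa b) hvsF (hsubF ha₀)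
      simpa [vsub_eq_sub] using this
    rw [← hWeq] at hmem
    have := hWu _ hmem
    linarith
  -- maximal dimension argument
  set D := {d : ℕ | ∃ a : EuclideanSpace ℝ (Fin M), a ≠ 0 ∧ finrank ℝ (vectorSpan ℝ (Fa a)) = d} with hD
  have hDne : D.Nonempty := by
    have : Nontrivial (EuclideanSpace ℝ (Fin M)) := by
      have : 0 < finrank ℝ (EuclideanSpace ℝ (Fin M)) := by
        rw [finrank_euclideanSpace]; simp; omega
      exact nontrivial_of_finrank_pos this
    obtain ⟨a, ha⟩ := exists_ne (0 : EuclideanSpace ℝ (Fin M))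
    exact ⟨_, a, ha, rfl⟩
  have hDbdd : BddAbove D := by
    refine ⟨M, fun d hd => ?_⟩
    obtain ⟨a, ha, rfl⟩ := hd
    exact (hdim_le a ha).trans (Nat.sub_le _ _)
  obtain ⟨a, ha, hrk⟩ := Nat.sSup_mem hDne hDbdd
  have hfin : finrank ℝ (vectorSpan ℝ (Fa a)) = M - 1 := by
    rcases Nat.lt_or_ge (finrank ℝ (vectorSpan ℝ (Fa a)) + 1) M with h | h
    · exfalso
      obtain ⟨b, hb, hlt⟩ := key a ha (by omega)
      have hle : finrank ℝ (vectorSpan ℝ (Fa b)) ≤ sSup D := le_csSup hDbdd ⟨b, hb, rfl⟩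
      omega
    · have := hdim_le a ha
      omega
  exact ⟨Fa a, ⟨(hFexposed a).isExtreme, hFconv a, hfin⟩,
    hPcompact.of_isClosed_subset (hFclosed a) (hFsub a), hFclosed a⟩
private lemma relbd_nonempty' {M : ℕ} {F : Set (EuclideanSpace ℝ (Fin M))}
    (hcl : IsClosed F) (hcp : IsCompact F) (hdim : vectorSpan ℝ F ≠ ⊥) :
    (F \ intrinsicInterior ℝ F).Nonempty := by
  have hFne : F.Nonempty := by
    rcases F.eq_empty_or_nonempty with h | h
    · exfalso; apply hdim; rw [h]; exact vectorSpan_empty ℝ _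
    · exact h
  rw [Set.nonempty_iff_ne_empty]
  intro hemp
  have hsub : F ⊆ intrinsicInterior ℝ F := by
    intro x hx
    by_contra hxn
    exact (Set.eq_empty_iff_forall_notMem.1 hemp x) ⟨hx, hxn⟩
  have heq : intrinsicInterior ℝ F = F := le_antisymm intrinsicInterior_subset hsub
  -- work in the subtype of the affine span
  set S := affineSpan ℝ F with hS
  set A : Set S := ((↑) ⁻¹' F : Set S) with hA
  have hAclosed : IsClosed A := hcl.preimage continuous_subtype_val
  have himage : (↑) '' A = F := by
    rw [hA]
    exact Set.image_preimage_eq_of_subset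
      (by rw [Subtype.range_coe]; exact subset_affineSpan ℝ F)
  have hAopen : IsOpen A := by
    have h1 : ((↑) '' interior A : Set (EuclideanSpace ℝ (Fin M))) = F := by
      rw [← heq]; rfl
    have h2 : A = interior A := by
      have := congrArg (fun s => ((↑) ⁻¹' s : Set S)) h1
      rw [Set.preimage_image_eq _ Subtype.coe_injective] at this
      exact this.symm
    have h3 : IsOpen (interior A) := isOpen_interior
    rwa [← h2] at h3
  have hAne : A.Nonempty := by
    obtain ⟨x, hx⟩ := hFne
    exact ⟨⟨x, subset_affineSpan ℝ F hx⟩, hx⟩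
  have hpre : PreconnectedSpace S := Subtype.preconnectedSpace (S.convex.isPreconnected)
  have hAuniv : A = Set.univ := IsClopen.eq_univ ⟨hAclosed, hAopen⟩ hAne
  have hFS : F = (S : Set (EuclideanSpace ℝ (Fin M))) := by
    rw [← himage, hAuniv, Set.image_univ, Subtype.range_coe]
  -- unboundedness contradiction
  obtain ⟨v, hvW, hvne⟩ := Submodule.exists_mem_ne_zero_of_ne_bot hdim
  obtain ⟨x₀, hx₀⟩ := hFne
  obtain ⟨C, hC⟩ := hcp.isBounded.exists_norm_le
  set t : ℝ := (C + ‖x₀‖ + 1) / ‖v‖ with ht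
  have hvnorm : 0 < ‖v‖ := norm_pos_iff.2 hvne
  have htpos : 0 < t := by
    have := hC x₀ hx₀
    have := norm_nonneg x₀
    apply div_pos (by linarith) hvnorm
  have hmem : t • v + x₀ ∈ F := by
    rw [hFS]
    have : t • v ∈ S.direction := by
      rw [hS, direction_affineSpan]
      exact Submodule.smul_mem _ _ hvW
    have := AffineSubspace.vadd_mem_of_mem_direction this (subset_affineSpan ℝ F hx₀)
    simpa using this
  have hnorm := hC _ hmem
  have h1 : ‖t • v‖ ≤ ‖t • v + x₀‖ + ‖x₀‖ := by
    calc ‖t • v‖ = ‖(t • v + x₀) + (-x₀)‖ := by congr 1; abel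
    _ ≤ ‖t • v + x₀‖ + ‖-x₀‖ := norm_add_le _ _
    _ = ‖t • v + x₀‖ + ‖x₀‖ := by rw [norm_neg]
  have h2 : ‖t • v‖ = C + ‖x₀‖ + 1 := by
    rw [norm_smul, Real.norm_eq_abs, abs_of_pos htpos, ht, div_mul_cancel₀ _ hvnorm.ne']
  linarith


/-- A facet of a convex polytope `P` in `ℝ^M`: a convex face (extreme subset) of dimension
`M - 1`. -/
def IsFacetR (M : ℕ) (P F : Set (EuclideanSpace ℝ (Fin M))) : Prop :=
  IsExtreme ℝ P F ∧ Convex ℝ F ∧ Module.finrank ℝ (vectorSpan ℝ F) = M - 1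

/-- The skeleton of a convex polytope `P` in `ℝ^M`: the union, over all facets `F` of `P`, of
`F` minus the relative interior of `F`. -/
def skelR (M : ℕ) (P : Set (EuclideanSpace ℝ (Fin M))) : Set (EuclideanSpace ℝ (Fin M)) :=
  ⋃ F ∈ {F : Set (EuclideanSpace ℝ (Fin M)) | IsFacetR M P F}, F \ intrinsicInterior ℝ F

/-- Let `B` be the open unit ball of `ℝ^M`, `M ≥ 3`, and let `P n` be a sequence
of convex polytopes with `P n ⊆ Int (P (n+1)) ⊆ B`, `⋃ n, P n = B`, such that every sequence
`w n ∈ skel (P n)` satisfies `∑ ‖w (n+1) - w n‖ = ∞`. Let `θ n` be a decreasing sequence of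
positive numbers with `∑ θ n < ∞` and let `U n` be the `θ n`-neighbourhood of `skel (P n)` in
`bP n`. If `p : [0,1) → B` is a path with `‖p t‖ → 1` as `t → 1` such that for all sufficiently
large `n` the image of `p` meets `bP n` only at `U n`, then `p` has infinite length. -/
theorem stmt3 (M : ℕ) (hM : 3 ≤ M)
    (P : ℕ → Set (EuclideanSpace ℝ (Fin M)))
    (hpoly : ∀ n, ∃ V : Finset (EuclideanSpace ℝ (Fin M)), P n = convexHull ℝ ↑V)
    (hint : ∀ n, (interior (P n)).Nonempty)
    (hsub : ∀ n, P n ⊆ interior (P (n + 1)))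
    (hball : (⋃ n, P n) = Metric.ball 0 1)
    (hskel : ∀ w : ℕ → EuclideanSpace ℝ (Fin M),
      (∀ n, w n ∈ skelR M (P n)) →
      Filter.Tendsto (fun m => ∑ j ∈ Finset.range m, ‖w (j + 1) - w j‖)
        Filter.atTop Filter.atTop)
    (θ : ℕ → ℝ) (hθpos : ∀ n, 0 < θ n) (hθanti : Antitone θ) (hθsum : Summable θ)
    (U : ℕ → Set (EuclideanSpace ℝ (Fin M)))
    (hU : ∀ n, U n = {w ∈ frontier (P n) | Metric.infDist w (skelR M (P n)) < θ n})
    (p : ℝ → EuclideanSpace ℝ (Fin M))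
    (hp : ContinuousOn p (Set.Ico 0 1))
    (hpin : ∀ t ∈ Set.Ico (0 : ℝ) 1, p t ∈ Metric.ball (0 : EuclideanSpace ℝ (Fin M)) 1)
    (hlim : Filter.Tendsto (fun t => ‖p t‖) (nhdsWithin 1 (Set.Iio 1)) (nhds 1))
    (hmeet : ∃ n₀ : ℕ, ∀ n ≥ n₀, ∀ t ∈ Set.Ico (0 : ℝ) 1,
      p t ∈ frontier (P n) → p t ∈ U n) :
    eVariationOn p (Set.Ico 0 1) = ⊤ := by
  classical
  obtain ⟨n₀, hn₀⟩ := hmeet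
  have hPcompact : ∀ n, IsCompact (P n) := fun n => by
    obtain ⟨V, hV⟩ := hpoly n; rw [hV]; exact V.finite_toSet.isCompact_convexHull ℝ
  have hPclosed : ∀ n, IsClosed (P n) := fun n => (hPcompact n).isClosed
  have hPne : ∀ n, (P n).Nonempty := fun n => (hint n).mono interior_subset
  have hPball : ∀ n, P n ⊆ Metric.ball 0 1 := fun n => by
    rw [← hball]; exact Set.subset_iUnion P n
  have hPmono : Monotone P :=
    monotone_nat_of_le_succ fun n => (hsub n).trans interior_subset
  have hskelne : ∀ n, (skelR M (P n)).Nonempty := by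
    intro n
    obtain ⟨V, hV⟩ := hpoly n
    obtain ⟨F, hF, hFcp, hFcl⟩ := exists_facet' M (by omega) V (by rw [← hV]; exact hint n)
    have hvs : vectorSpan ℝ F ≠ ⊥ := by
      intro h
      have h3 := hF.2.2
      rw [h, finrank_bot] at h3
      omega
    obtain ⟨x, hx⟩ := relbd_nonempty' hFcl hFcp hvs
    refine ⟨x, Set.mem_biUnion ?_ hx⟩
    show IsFacetR M (P n) F
    rw [hV]
    exact hF
  -- exit points exist
  have hexit : ∀ n, ∃ t, t ∈ Set.Ico (0:ℝ) 1 ∧ p t ∉ interior (P n) := by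
    intro n
    obtain ⟨x, hxP, hmax⟩ := (hPcompact n).exists_isMaxOn (hPne n) continuous_norm.continuousOn
    have hr : ‖x‖ < 1 := by simpa [mem_ball_zero_iff] using hPball n hxP
    have h1 : ∀ᶠ t in nhdsWithin 1 (Set.Iio 1), ‖x‖ < ‖p t‖ :=
      hlim.eventually (eventually_gt_nhds hr)
    have h2 : ∀ᶠ t in nhdsWithin 1 (Set.Iio 1), t ∈ Set.Ico (0:ℝ) 1 := by
      have ha : ∀ᶠ t in nhdsWithin 1 (Set.Iio 1), t ∈ Set.Iio (1:ℝ) :=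
        eventually_mem_nhdsWithin
      have hb : ∀ᶠ t in nhdsWithin 1 (Set.Iio 1), (0:ℝ) < t :=
        Filter.Eventually.filter_mono nhdsWithin_le_nhds (eventually_gt_nhds one_pos)
      filter_upwards [ha, hb] with t h1 h2
      exact ⟨le_of_lt h2, h1⟩
    obtain ⟨t, ht1, ht2⟩ := (h1.and h2).exists
    refine ⟨t, ht2, fun hmem => ?_⟩
    exact absurd (hmax (interior_subset hmem)) (not_le.2 ht1)
  set S : ℕ → Set ℝ := fun n => {t | t ∈ Set.Ico (0:ℝ) 1 ∧ p t ∉ interior (P n)} with hSdef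
  have hSne : ∀ n, (S n).Nonempty := fun n => (hexit n).imp fun t ht => ⟨ht.1, ht.2⟩
  have hSbdd : ∀ n, BddBelow (S n) := fun n => ⟨0, fun t ht => ht.1.1⟩
  set τ : ℕ → ℝ := fun n => sInf (S n) with hτdef
  have hτmem : ∀ n, τ n ∈ Set.Ico (0:ℝ) 1 := by
    intro n
    constructor
    · exact le_csInf (hSne n) (fun t ht => ht.1.1)
    · obtain ⟨t, ht⟩ := hSne n
      exact lt_of_le_of_lt (csInf_le (hSbdd n) ht) ht.1.2
  have hlow : ∀ n, ∀ t ∈ Set.Ico (0:ℝ) 1, t < τ n → p t ∈ interior (P n) := by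
    intro n t ht htlt
    by_contra h
    exact absurd (csInf_le (hSbdd n) ⟨ht, h⟩) (not_le.2 htlt)
  have hτnotint : ∀ n, p (τ n) ∉ interior (P n) := by
    intro n hmem
    have hc : ContinuousWithinAt p (Set.Ico 0 1) (τ n) := hp _ (hτmem n)
    have hpre : p ⁻¹' interior (P n) ∈ nhdsWithin (τ n) (Set.Ico 0 1) :=
      hc.preimage_mem_nhdsWithin (isOpen_interior.mem_nhds hmem)
    rw [Metric.mem_nhdsWithin_iff] at hpre
    obtain ⟨ε, hε, hball'⟩ := hpre
    have hlb : ∀ t ∈ S n, τ n + ε ≤ t := by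
      intro t ht
      have h1 : τ n ≤ t := csInf_le (hSbdd n) ht
      by_contra h
      push_neg at h
      have hmem' : t ∈ Metric.ball (τ n) ε := by
        rw [Real.ball_eq_Ioo]
        constructor <;> linarith
      exact ht.2 (hball' ⟨hmem', ht.1⟩)
    have := le_csInf (hSne n) hlb
    have : τ n + ε ≤ τ n := this
    linarith
  have h0ball : p 0 ∈ Metric.ball (0:EuclideanSpace ℝ (Fin M)) 1 :=
    hpin 0 ⟨le_refl 0, one_pos⟩
  rw [← hball] at h0ball
  obtain ⟨m, hm⟩ := Set.mem_iUnion.1 h0ball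
  set N := max n₀ (m+1) with hN
  have h0int : ∀ n, N ≤ n → p 0 ∈ interior (P n) := by
    intro n hn
    obtain ⟨k, rfl⟩ : ∃ k, n = k + 1 := ⟨n - 1, by omega⟩
    exact hsub k (hPmono (by omega : m ≤ k) hm)
  have hτpos : ∀ n, N ≤ n → 0 < τ n := by
    intro n hn
    rcases lt_or_eq_of_le (hτmem n).1 with h | h
    · exact h
    · exact absurd (h ▸ h0int n hn) (hτnotint n)
  have hτP : ∀ n, N ≤ n → p (τ n) ∈ P n := by
    intro n hn
    have hc : ContinuousWithinAt p (Set.Ico 0 (τ n)) (τ n) :=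
      (hp _ (hτmem n)).mono (Set.Ico_subset_Ico le_rfl (le_of_lt (hτmem n).2))
    have hτcl : τ n ∈ closure (Set.Ico 0 (τ n)) := by
      rw [closure_Ico (hτpos n hn).ne]
      exact ⟨le_of_lt (hτpos n hn), le_rfl⟩
    have hclim := hc.mem_closure_image hτcl
    have hsubim : p '' (Set.Ico 0 (τ n)) ⊆ P n := by
      rintro _ ⟨t, ht, rfl⟩
      exact interior_subset (hlow n t ⟨ht.1, lt_trans ht.2 (hτmem n).2⟩ ht.2)
    have := closure_mono hsubim hclim
    rwa [(hPclosed n).closure_eq] at this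
  have hτfrontier : ∀ n, N ≤ n → p (τ n) ∈ frontier (P n) := by
    intro n hn
    rw [(hPclosed n).frontier_eq]
    exact ⟨hτP n hn, hτnotint n⟩
  have hτmono : Monotone τ := by
    apply monotone_nat_of_le_succ
    intro n
    apply csInf_le_csInf (hSbdd n) (hSne (n+1))
    intro t ht
    exact ⟨ht.1, fun hc => ht.2 (hsub n (interior_subset hc))⟩
  -- choose skeleton approximants
  have hwex : ∀ n, ∃ y ∈ skelR M (P n), (N ≤ n → dist (p (τ n)) y < θ n) := by
    intro n
    by_cases hn : N ≤ n
    · have hf := hτfrontier n hn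
      have hUmem := hn₀ n (le_trans (le_max_left _ _) hn) (τ n) (hτmem n) hf
      rw [hU n] at hUmem
      obtain ⟨y, hy, hdy⟩ := (Metric.infDist_lt_iff (hskelne n)).1 hUmem.2
      exact ⟨y, hy, fun _ => hdy⟩
    · obtain ⟨y, hy⟩ := hskelne n
      exact ⟨y, hy, fun h => absurd h hn⟩
  choose w hw hwd using hwex
  have hdiv := hskel w hw
  by_contra hfin
  set VV := (eVariationOn p (Set.Ico 0 1)).toReal with hVV
  set u : ℕ → ℝ := fun i => τ (N + i) with hu
  have humono : Monotone u := fun i j hij => hτmono (by omega)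
  have humem : ∀ i, u i ∈ Set.Ico (0:ℝ) 1 := fun i => hτmem _
  have hbound : ∀ k, ∑ i ∈ Finset.range k, dist (p (u (i+1))) (p (u i)) ≤ VV := by
    intro k
    have h1 := eVariationOn.sum_le (f := p) (n := k) humono humem
    have h2 : ∑ i ∈ Finset.range k, edist (p (u (i+1))) (p (u i)) =
        ENNReal.ofReal (∑ i ∈ Finset.range k, dist (p (u (i+1))) (p (u i))) := by
      rw [ENNReal.ofReal_sum_of_nonneg (fun i _ => dist_nonneg)]
      exact Finset.sum_congr rfl fun i _ => (edist_dist _ _)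
    rw [h2] at h1
    exact (ENNReal.ofReal_le_iff_le_toReal hfin).1 h1
  set Θ := ∑' n, θ n with hΘ
  set Sw : ℕ → ℝ := fun m => ∑ j ∈ Finset.range m, ‖w (j+1) - w j‖ with hSw
  have hSwmono : Monotone Sw := by
    apply monotone_nat_of_le_succ
    intro n
    rw [hSw]
    simp only [Finset.sum_range_succ]
    have := norm_nonneg (w (n+1) - w n)
    linarith [Finset.sum_range_succ (fun j => ‖w (j+1) - w j‖) n]
  have hθpart : ∀ k, ∑ i ∈ Finset.range k, θ (N + i) ≤ Θ := by
    intro k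
    have h := Finset.sum_Ico_eq_sum_range θ N (N + k)
    simp only [Nat.add_sub_cancel_left] at h
    rw [← h]
    exact hθsum.sum_le_tsum _ (fun i _ => (hθpos i).le)
  have hkey : ∀ k, Sw (N + k) ≤ VV + Sw N + 2 * Θ := by
    intro k
    have hterm : ∀ i, ‖w (N + i + 1) - w (N + i)‖ ≤
        dist (p (u (i+1))) (p (u i)) + θ (N + i) + θ (N + i + 1) := by
      intro i
      have e1 : dist (p (u (i+1))) (w (N + i + 1)) < θ (N + i + 1) := by
        have := hwd (N + i + 1) (by omega)
        simpa [hu, dist_comm, show N + (i+1) = N + i + 1 from rfl] using this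
      have e2 : dist (p (u i)) (w (N + i)) < θ (N + i) := hwd (N + i) (by omega)
      have tri : dist (w (N + i + 1)) (w (N + i)) ≤
          dist (w (N + i + 1)) (p (u (i+1))) + dist (p (u (i+1))) (p (u i)) +
            dist (p (u i)) (w (N + i)) := dist_triangle4 _ _ _ _
      rw [dist_comm (w (N + i + 1)) (p (u (i+1)))] at tri
      have : ‖w (N + i + 1) - w (N + i)‖ = dist (w (N + i + 1)) (w (N + i)) :=
        (dist_eq_norm _ _).symm
      rw [this]
      linarith
    have hsum1 : Sw (N + k) - Sw N = ∑ i ∈ Finset.range k, ‖w (N + i + 1) - w (N + i)‖ := by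
      rw [hSw]
      simp only
      rw [Finset.sum_range_add]
      ring
    have hsum2 : ∑ i ∈ Finset.range k, ‖w (N + i + 1) - w (N + i)‖ ≤
        ∑ i ∈ Finset.range k, (dist (p (u (i+1))) (p (u i)) + θ (N + i) + θ (N + i + 1)) :=
      Finset.sum_le_sum (fun i _ => hterm i)
    have hsum3 : ∑ i ∈ Finset.range k, (dist (p (u (i+1))) (p (u i)) + θ (N + i) + θ (N + i + 1))
        = (∑ i ∈ Finset.range k, dist (p (u (i+1))) (p (u i)))
          + (∑ i ∈ Finset.range k, θ (N + i)) + (∑ i ∈ Finset.range k, θ (N + i + 1)) := by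
      rw [← Finset.sum_add_distrib, ← Finset.sum_add_distrib]
    have hθ2 : ∑ i ∈ Finset.range k, θ (N + i + 1) ≤ ∑ i ∈ Finset.range k, θ (N + i) :=
      Finset.sum_le_sum (fun i _ => hθanti (by omega))
    have h4 := hbound k
    have h5 := hθpart k
    linarith [hsum1, hsum2]
  obtain ⟨mm, hmm⟩ := (hdiv.eventually_gt_atTop (VV + Sw N + 2 * Θ)).exists
  have : Sw mm ≤ Sw (N + mm) := hSwmono (by omega)
  have := hkey mm
  have hmm' : VV + Sw N + 2 * Θ < Sw mm := hmm
  linarith
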